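/- For a tree T on n vertices with signed incidence matrix B ∈ ℝ^{(n-1) × n} and any assignment θ_l ∈ ℝ^{n-1}, and for any voltage magnitudes v : V → (0, ∞), if |θ_l(e)| < v(s_e) v(r_e) for every edge e, then there exist nodal angles φ : V → ℝ such that v(s_e) v(r_e) sin(φ(s_e) - φ(r_e)) = θ_l(e) for all edges e. -/

import Mathlib

def GraphConnected {E V : Type*} (tail head : E → V) : Prop :=
  ∀ v w : V, Relation.ReflTransGen
    (fun a b => ∃ e : E, (tail e = a ∧ head e = b) ∨ (tail e = b ∧ head e = a)) v w

/-- Angle recovery always succeeds in radial networks: for a tree (connected graph with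
`n - 1` edges), branch targets `θl` with `|θl e| < v(tail e)·v(head e)`, and positive voltage
magnitudes `v`, there exist nodal angles `φ` with
`v(tail e)·v(head e)·sin(φ(tail e) - φ(head e)) = θl e` on every edge. -/
theorem tree_angle_recovery {E V : Type*} [Fintype E] [Fintype V] [Nonempty V]
    (tail head : E → V)
    (hsimple : ∀ e : E, tail e ≠ head e)
    (hconn : GraphConnected tail head)
    (hcard : Fintype.card E = Fintype.card V - 1)
    (v : V → ℝ) (hv : ∀ n, 0 < v n)
    (θl : E → ℝ) (hθl : ∀ e, |θl e| < v (tail e) * v (head e)) :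
    ∃ φ : V → ℝ, ∀ e : E,
      v (tail e) * v (head e) * Real.sin (φ (tail e) - φ (head e)) = θl e := by
  classical
  let L : (V → ℝ) →ₗ[ℝ] (E → ℝ) :=
  { toFun := fun φ e => φ (tail e) - φ (head e)
    map_add' := by intro x y; funext e; simp; ring
    map_smul' := by intro c x; funext e; simp [smul_eq_mul]; ring }
  have hL : ∀ φ e, L φ e = φ (tail e) - φ (head e) := fun _ _ => rfl
  have hker : LinearMap.ker L = Submodule.span ℝ {(fun _ => (1:ℝ) : V → ℝ)} := by
    apply le_antisymm
    · intro φ hφ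
      have hφ0 : ∀ e, φ (tail e) = φ (head e) := by
        intro e
        have := congrFun (LinearMap.mem_ker.mp hφ) e
        simp [hL] at this
        linarith [this]
      have hconst : ∀ a b : V, φ a = φ b := by
        intro a b
        induction hconn a b with
        | refl => rfl
        | tail _ hstep ih =>
          obtain ⟨e, ⟨h1, h2⟩ | ⟨h1, h2⟩⟩ := hstep
          · rw [ih, ← h1, ← h2, hφ0]
          · rw [ih, ← h1, ← h2, hφ0]
      rw [Submodule.mem_span_singleton]
      refine ⟨φ (Classical.arbitrary V), ?_⟩
      funext y
      simp [hconst y (Classical.arbitrary V)]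
    · rw [Submodule.span_le, Set.singleton_subset_iff]
      simp only [SetLike.mem_coe, LinearMap.mem_ker]
      funext e
      simp [hL]
  have hone : (fun _ => (1:ℝ) : V → ℝ) ≠ 0 := by
    intro h
    have := congrFun h (Classical.arbitrary V)
    simp at this
  have hkerfin : Module.finrank ℝ (LinearMap.ker L) = 1 := by
    rw [hker]; exact finrank_span_singleton hone
  have hVfin : Module.finrank ℝ (V → ℝ) = Fintype.card V :=
    Module.finrank_fintype_fun_eq_card ℝ
  have hEfin : Module.finrank ℝ (E → ℝ) = Fintype.card E :=
    Module.finrank_fintype_fun_eq_card ℝ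
  have hrn := LinearMap.finrank_range_add_finrank_ker L
  rw [hkerfin, hVfin] at hrn
  have hVpos : 1 ≤ Fintype.card V := Fintype.card_pos
  have hrange : Module.finrank ℝ (LinearMap.range L) = Module.finrank ℝ (E → ℝ) := by
    rw [hEfin, hcard]; omega
  have htop : LinearMap.range L = ⊤ := Submodule.eq_top_of_finrank_eq hrange
  have hsurj : Function.Surjective L := LinearMap.range_eq_top.mp htop
  obtain ⟨φ, hφ⟩ := hsurj (fun e => Real.arcsin (θl e / (v (tail e) * v (head e))))
  refine ⟨φ, fun e => ?_⟩
  have hP : 0 < v (tail e) * v (head e) := mul_pos (hv _) (hv _)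
  have habs : |θl e / (v (tail e) * v (head e))| < 1 := by
    rw [abs_div, abs_of_pos hP, div_lt_one hP]; exact hθl e
  have h1 : φ (tail e) - φ (head e) = Real.arcsin (θl e / (v (tail e) * v (head e))) := by
    have := congrFun hφ e; simpa [hL] using this
  rw [h1, Real.sin_arcsin (by linarith [abs_lt.mp habs]) (by linarith [abs_lt.mp habs])]
  field_simp
  exact mul_div_cancel_left₀ _ hP.ne'
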